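/- For any collusion strategy with parameters K_b = E_{x|b}[Ψ_b(x)] satisfying Σ_{y∈Q} θ_{y|σ} = 1 for all σ, the sum rule q * Σ_{b=0}^{c} K_b * P_1(b) = 1 holds. -/

import Mathlib

/-- Generalized Beta function `B(v) = (∏ Γ(v_a)) / Γ(∑ v_a)`. -/
noncomputable def GBeta {n : ℕ} (v : Fin n → ℝ) : ℝ :=
  (∏ a, Real.Gamma (v a)) / Real.Gamma (∑ a, v a)

/-- Ordinary Beta function `B(x,y) = Γ(x)Γ(y)/Γ(x+y)`. -/
noncomputable def Beta2 (x y : ℝ) : ℝ :=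
  Real.Gamma x * Real.Gamma y / Real.Gamma (x + y)

open Finset
noncomputable def af (x : ℝ) (m : ℕ) : ℝ := ∏ j ∈ Finset.range m, (x + j)
lemma af_zero (x : ℝ) : af x 0 = 1 := by simp [af]
lemma af_succ (x : ℝ) (m : ℕ) : af x (m+1) = af x m * (x + m) := Finset.prod_range_succ _ _

lemma vander2 (x y : ℝ) (c : ℕ) :
    ∑ b ∈ Finset.range (c+1), (c.choose b : ℝ) * (af x b * af y (c - b)) = af (x + y) c := by
  induction c with
  | zero => simp [af_zero]
  | succ c ih =>
    have key : ∀ b ∈ range (c+2), ((c+1).choose b : ℝ) * (af x b * af y (c+1-b))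
        = (c.choose b : ℝ) * (af x b * af y (c+1-b))
          + (if b = 0 then 0 else (c.choose (b-1) : ℝ) * (af x b * af y (c+1-b))) := by
      intro b _
      cases b with
      | zero => simp
      | succ b =>
        rw [if_neg (Nat.succ_ne_zero b), Nat.choose_succ_succ, Nat.succ_sub_one]
        push_cast; ring
    have hA : ∑ b ∈ range (c+2), (c.choose b : ℝ) * (af x b * af y (c+1-b))
        = ∑ b ∈ range (c+1), (c.choose b : ℝ) * (af x b * (af y (c-b) * (y + (c-b : ℕ)))) := by
      rw [Finset.sum_range_succ]
      simp only [Nat.choose_succ_self, Nat.cast_zero, zero_mul, add_zero]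
      refine Finset.sum_congr rfl fun b hb => ?_
      have hb' : b ≤ c := Nat.lt_succ_iff.mp (Finset.mem_range.mp hb)
      rw [Nat.succ_sub hb', af_succ]
    have hB : ∑ b ∈ range (c+2),
          (if b = 0 then (0:ℝ) else (c.choose (b-1) : ℝ) * (af x b * af y (c+1-b)))
        = ∑ b ∈ range (c+1), (c.choose b : ℝ) * ((af x b * (x + b)) * af y (c-b)) := by
      rw [Finset.sum_range_succ', if_pos rfl, add_zero]
      refine Finset.sum_congr rfl fun b _ => ?_
      rw [if_neg (Nat.succ_ne_zero b), Nat.succ_sub_one, Nat.succ_sub_succ, af_succ]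
    calc ∑ b ∈ range (c+1+1), ((c+1).choose b : ℝ) * (af x b * af y (c+1-b))
        = ∑ b ∈ range (c+2), ((c.choose b : ℝ) * (af x b * af y (c+1-b))
          + (if b = 0 then 0 else (c.choose (b-1) : ℝ) * (af x b * af y (c+1-b)))) :=
          Finset.sum_congr rfl key
      _ = ∑ b ∈ range (c+1), ((c.choose b : ℝ) * (af x b * af y (c-b))) * (x + y + c) := by
          rw [Finset.sum_add_distrib, hA, hB, ← Finset.sum_add_distrib]
          refine Finset.sum_congr rfl fun b hb => ?_
          have hb' : b ≤ c := Nat.lt_succ_iff.mp (Finset.mem_range.mp hb)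
          rw [Nat.cast_sub hb']
          ring
      _ = af (x+y) (c+1) := by rw [← Finset.sum_mul, ih, af_succ]


lemma multinomial_fin_cons {n : ℕ} (a : ℕ) (x : Fin n → ℕ) :
    Nat.multinomial Finset.univ (Fin.cons a x)
      = (a + ∑ i, x i).choose a * Nat.multinomial Finset.univ x := by
  rw [Fin.univ_succ, Nat.multinomial_cons, Finset.sum_map]
  simp only [Function.Embedding.coeFn_mk, Fin.cons_succ, Fin.cons_zero]
  congr 1
  unfold Nat.multinomial
  rw [Finset.sum_map, Finset.prod_map]
  simp only [Function.Embedding.coeFn_mk, Fin.cons_succ]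

lemma sum_antidiagonalTuple_succ {M : Type*} [AddCommMonoid M] (n c : ℕ)
    (g : (Fin (n+1) → ℕ) → M) :
    ∑ σ ∈ Finset.Nat.antidiagonalTuple (n+1) c, g σ
      = ∑ p ∈ Finset.HasAntidiagonal.antidiagonal c, ∑ x ∈ Finset.Nat.antidiagonalTuple n p.2,
          g (Fin.cons p.1 x) := by
  rw [Finset.sum_sigma']
  refine Finset.sum_nbij' (i := fun (σ : Fin (n+1) → ℕ) => (⟨(σ 0, ∑ j : Fin n, σ j.succ), fun j : Fin n => σ j.succ⟩ : (p : ℕ × ℕ) × (Fin n → ℕ)))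
    (j := fun z => Fin.cons z.1.1 z.2) ?_ ?_ ?_ ?_ ?_
  · intro σ hσ
    rw [Finset.Nat.mem_antidiagonalTuple, Fin.sum_univ_succ] at hσ
    simp only [Finset.mem_sigma, Finset.HasAntidiagonal.mem_antidiagonal, Finset.Nat.mem_antidiagonalTuple]
    exact ⟨hσ, trivial⟩
  · rintro ⟨⟨b, m⟩, x⟩ hz
    simp only [Finset.mem_sigma, Finset.HasAntidiagonal.mem_antidiagonal, Finset.Nat.mem_antidiagonalTuple] at hz
    rw [Finset.Nat.mem_antidiagonalTuple, Fin.sum_univ_succ]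
    simp only [Fin.cons_zero, Fin.cons_succ]
    rw [hz.2, hz.1]
  · intro σ _
    exact Fin.cons_self_tail σ
  · rintro ⟨⟨b, m⟩, x⟩ hz
    simp only [Finset.mem_sigma, Finset.HasAntidiagonal.mem_antidiagonal, Finset.Nat.mem_antidiagonalTuple] at hz
    simp only [Fin.cons_succ, Fin.cons_zero]
    rw [hz.2]
  · intro σ _
    exact congrArg g (Fin.cons_self_tail σ).symm

lemma af_pos {x : ℝ} (hx : 0 < x) (m : ℕ) : 0 < af x m :=
  Finset.prod_pos fun j _ => by positivity

lemma Gamma_af {x : ℝ} (hx : 0 < x) (m : ℕ) :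
    Real.Gamma (x + m) = af x m * Real.Gamma x := by
  induction m with
  | zero => simp [af_zero]
  | succ m ih =>
    have h : x + ((m+1 : ℕ) : ℝ) = (x + m) + 1 := by push_cast; ring
    rw [h, Real.Gamma_add_one (by positivity), ih, af_succ]; ring

lemma vanderN : ∀ (n : ℕ) (v : Fin n → ℝ) (c : ℕ),
    ∑ σ ∈ Finset.Nat.antidiagonalTuple n c,
        (Nat.multinomial Finset.univ σ : ℝ) * ∏ i, af (v i) (σ i)
      = af (∑ i, v i) c := by
  intro n
  induction n with
  | zero =>
    intro v c
    cases c with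
    | zero => simp [Finset.Nat.antidiagonalTuple_zero_zero, af_zero]
    | succ c =>
      rw [Finset.Nat.antidiagonalTuple_zero_succ, Finset.sum_empty]
      rw [Finset.univ_eq_empty, Finset.sum_empty]
      refine (Finset.prod_eq_zero (Finset.mem_range.mpr (Nat.succ_pos c)) ?_).symm
      norm_num
  | succ n ih =>
    intro v c
    rw [sum_antidiagonalTuple_succ]
    have step : ∀ p ∈ Finset.HasAntidiagonal.antidiagonal c,
        ∑ x ∈ Finset.Nat.antidiagonalTuple n p.2,
            (Nat.multinomial Finset.univ (Fin.cons p.1 x : Fin (n+1) → ℕ) : ℝ)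
              * ∏ i, af (v i) ((Fin.cons p.1 x : Fin (n+1) → ℕ) i)
          = (c.choose p.1 : ℝ) * (af (v 0) p.1 * af (∑ i : Fin n, v i.succ) p.2) := by
      rintro ⟨b, m⟩ hp
      rw [Finset.HasAntidiagonal.mem_antidiagonal] at hp
      have : ∀ x ∈ Finset.Nat.antidiagonalTuple n m,
          (Nat.multinomial Finset.univ (Fin.cons b x : Fin (n+1) → ℕ) : ℝ)
              * ∏ i, af (v i) ((Fin.cons b x : Fin (n+1) → ℕ) i)
            = (c.choose b : ℝ) * af (v 0) b
                * ((Nat.multinomial Finset.univ x : ℝ) * ∏ i, af (v i.succ) (x i)) := by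
        intro x hx
        rw [Finset.Nat.mem_antidiagonalTuple] at hx
        rw [multinomial_fin_cons, hx, hp, Fin.prod_univ_succ]
        simp only [Fin.cons_zero, Fin.cons_succ]
        push_cast
        ring
      rw [Finset.sum_congr rfl this, ← Finset.mul_sum, ih, mul_assoc]
    rw [Finset.sum_congr rfl step, Fin.sum_univ_succ,
      Finset.Nat.sum_antidiagonal_eq_sum_range_succ_mk]
    exact vander2 _ _ c

lemma term_eq (Q c b : ℕ) (κ : ℝ) (hκ : 0 < κ) (hQ : 1 ≤ Q) (σ : Fin (Q+1) → ℕ)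
    (hσ : ∑ a, σ a = c) (hσ0 : σ 0 = b) :
    ((Nat.multinomial Finset.univ (σ ∘ (0 : Fin (Q + 1)).succAbove) : ℝ)
        * GBeta (fun i : Fin Q => κ + σ ((0 : Fin (Q + 1)).succAbove i))
        / GBeta (fun _ : Fin Q => κ))
      * ((Nat.choose c b : ℝ)
          * Beta2 (κ + b) (κ * (Q : ℝ) + ((c : ℝ) - b)) / Beta2 κ (κ * (Q : ℝ)))
      = (Nat.multinomial Finset.univ σ : ℝ) * (∏ i, af κ (σ i))
          / af (κ * ((Q:ℝ)+1)) c := by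
  have hQ1 : (1:ℝ) ≤ (Q:ℝ) := by exact_mod_cast hQ
  have hQ0 : (0:ℝ) < Q := lt_of_lt_of_le one_pos hQ1
  have hQκ : 0 < κ * (Q:ℝ) := by positivity
  have hQ1κ : 0 < κ * ((Q:ℝ)+1) := by positivity
  have hsplit : c = b + ∑ i : Fin Q, σ (Fin.succ i) := by
    rw [← hσ, Fin.sum_univ_succ, hσ0]
  have hbc : b ≤ c := hsplit ▸ Nat.le_add_right b _
  set m : ℕ := c - b with hm
  have ht : ∑ i : Fin Q, σ (Fin.succ i) = m := by omega
  have hbm : b + m = c := by omega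
  simp only [Fin.succAbove_zero]
  have e1 : GBeta (fun i : Fin Q => κ + σ (Fin.succ i))
      = ((∏ i, af κ (σ (Fin.succ i))) * Real.Gamma κ ^ Q)
          / (af (κ * Q) m * Real.Gamma (κ * Q)) := by
    unfold GBeta
    have hsum : ∑ i : Fin Q, (κ + (σ (Fin.succ i) : ℝ)) = κ * Q + m := by
      rw [Finset.sum_add_distrib, Finset.sum_const, Finset.card_univ, Fintype.card_fin,
        nsmul_eq_mul, ← Nat.cast_sum, ht, mul_comm]
    rw [hsum, Gamma_af hQκ m,
      Finset.prod_congr rfl (fun i (_ : i ∈ Finset.univ) => Gamma_af hκ (σ (Fin.succ i))),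
      Finset.prod_mul_distrib, Finset.prod_const, Finset.card_univ, Fintype.card_fin]
  have e2 : GBeta (fun _ : Fin Q => κ) = Real.Gamma κ ^ Q / Real.Gamma (κ * Q) := by
    unfold GBeta
    rw [Finset.prod_const, Finset.sum_const, Finset.card_univ, Fintype.card_fin,
      nsmul_eq_mul, mul_comm]
  have e3 : Beta2 (κ + b) (κ * Q + ((c:ℝ) - b))
      = (af κ b * Real.Gamma κ) * (af (κ * Q) m * Real.Gamma (κ * Q))
          / (af (κ * ((Q:ℝ)+1)) c * Real.Gamma (κ * ((Q:ℝ)+1))) := by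
    unfold Beta2
    have hcb : (c:ℝ) - b = (m : ℕ) := by
      rw [hm, Nat.cast_sub hbc]
    rw [hcb, Gamma_af hκ b, Gamma_af hQκ m]
    have harg : κ + (b:ℝ) + (κ * Q + (m:ℕ)) = κ * ((Q:ℝ)+1) + c := by
      have : (b:ℝ) + (m:ℕ) = c := by exact_mod_cast congrArg (Nat.cast : ℕ → ℝ) hbm
      linarith
    rw [harg, Gamma_af hQ1κ c]
  have e4 : Beta2 κ (κ * Q)
      = Real.Gamma κ * Real.Gamma (κ * Q) / Real.Gamma (κ * ((Q:ℝ)+1)) := by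
    unfold Beta2
    rw [show κ + κ * (Q:ℝ) = κ * ((Q:ℝ)+1) by ring]
  have hM : (Nat.multinomial Finset.univ σ : ℝ)
      = (c.choose b : ℝ) * (Nat.multinomial Finset.univ (σ ∘ Fin.succ) : ℝ) := by
    have hσc : σ = Fin.cons b (Fin.tail σ) := by
      rw [← hσ0]; exact (Fin.cons_self_tail σ).symm
    have : Nat.multinomial Finset.univ σ
        = (b + ∑ i, Fin.tail σ i).choose b * Nat.multinomial Finset.univ (Fin.tail σ) := by
      conv_lhs => rw [hσc]
      exact multinomial_fin_cons b (Fin.tail σ)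
    rw [this]
    have htail : ∑ i, Fin.tail σ i = m := ht
    rw [htail, hbm]
    push_cast
    rfl
  have hprod : ∏ i : Fin (Q+1), af κ (σ i) = af κ b * ∏ i : Fin Q, af κ (σ (Fin.succ i)) := by
    rw [Fin.prod_univ_succ, hσ0]
  have g1 : Real.Gamma κ ≠ 0 := (Real.Gamma_pos_of_pos hκ).ne'
  have g2 : Real.Gamma (κ * Q) ≠ 0 := (Real.Gamma_pos_of_pos hQκ).ne'
  have g3 : Real.Gamma (κ * ((Q:ℝ)+1)) ≠ 0 := (Real.Gamma_pos_of_pos hQ1κ).ne'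
  have a1 : af (κ * Q) m ≠ 0 := (af_pos hQκ m).ne'
  have a2 : af (κ * ((Q:ℝ)+1)) c ≠ 0 := (af_pos hQ1κ c).ne'
  rw [e1, e2, e3, e4, hM, hprod]
  field_simp

theorem stmt_9 (Q c : ℕ) (hQ : 1 ≤ Q) (hc : 1 ≤ c) (κ : ℝ) (hκ : 0 < κ)
    (θ : (Fin (Q + 1) → ℕ) → Fin (Q + 1) → ℝ)
    (hsum : ∀ σ : Fin (Q + 1) → ℕ, (∑ a, σ a) = c → ∑ y, θ σ y = 1)
    (hsymm : ∀ (π : Equiv.Perm (Fin (Q + 1))) (σ : Fin (Q + 1) → ℕ) (y : Fin (Q + 1)),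
        θ (σ ∘ π) y = θ σ (π y)) :
    ((Q : ℝ) + 1) * ∑ b ∈ Finset.range (c + 1),
        (∑' σ : {σ : Fin (Q + 1) → ℕ // (∑ a, σ a) = c ∧ σ 0 = b},
            ((Nat.multinomial Finset.univ (σ.1 ∘ (0 : Fin (Q + 1)).succAbove) : ℝ)
                * GBeta (fun i : Fin Q => κ + σ.1 ((0 : Fin (Q + 1)).succAbove i))
                / GBeta (fun _ : Fin Q => κ))
              * θ σ.1 0)
          * ((Nat.choose c b : ℝ)
              * Beta2 (κ + b) (κ * (Q : ℝ) + ((c : ℝ) - b)) / Beta2 κ (κ * (Q : ℝ)))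
      = 1 := by
  classical
  have hQ1 : (1:ℝ) ≤ (Q:ℝ) := by exact_mod_cast hQ
  have hQ1κ : 0 < κ * ((Q:ℝ)+1) := by positivity
  set S := Finset.Nat.antidiagonalTuple (Q+1) c with hS
  set P : (Fin (Q+1) → ℕ) → ℝ := fun σ =>
    (Nat.multinomial Finset.univ σ : ℝ) * (∏ i, af κ (σ i)) / af (κ * ((Q:ℝ)+1)) c with hP
  have key : ∀ b ∈ Finset.range (c+1),
      (∑' σ : {σ : Fin (Q + 1) → ℕ // (∑ a, σ a) = c ∧ σ 0 = b},
          ((Nat.multinomial Finset.univ (σ.1 ∘ (0 : Fin (Q + 1)).succAbove) : ℝ)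
              * GBeta (fun i : Fin Q => κ + σ.1 ((0 : Fin (Q + 1)).succAbove i))
              / GBeta (fun _ : Fin Q => κ))
            * θ σ.1 0)
        * ((Nat.choose c b : ℝ)
            * Beta2 (κ + b) (κ * (Q : ℝ) + ((c : ℝ) - b)) / Beta2 κ (κ * (Q : ℝ)))
      = ∑ σ ∈ S.filter (fun σ => σ 0 = b), P σ * θ σ 0 := by
    intro b _
    have hiff : ∀ σ : Fin (Q+1) → ℕ,
        σ ∈ S.filter (fun σ => σ 0 = b) ↔ ((∑ a, σ a) = c ∧ σ 0 = b) := by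
      intro σ
      simp [hS, Finset.mem_filter, Finset.Nat.mem_antidiagonalTuple]
    haveI inst : Fintype {σ : Fin (Q + 1) → ℕ // (∑ a, σ a) = c ∧ σ 0 = b} :=
      Fintype.ofFinset (S.filter fun σ => σ 0 = b) hiff
    have hsub := Finset.sum_subtype (F := inst) (S.filter fun σ => σ 0 = b) hiff
      (fun σ : Fin (Q+1) → ℕ =>
        ((Nat.multinomial Finset.univ (σ ∘ (0 : Fin (Q + 1)).succAbove) : ℝ)
            * GBeta (fun i : Fin Q => κ + σ ((0 : Fin (Q + 1)).succAbove i))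
            / GBeta (fun _ : Fin Q => κ))
          * θ σ 0)
    rw [tsum_fintype, ← hsub, Finset.sum_mul]
    refine Finset.sum_congr rfl fun σ hσ => ?_
    obtain ⟨hσ1, hσ2⟩ := (hiff σ).mp hσ
    have hterm := term_eq Q c b κ hκ hQ σ hσ1 hσ2
    calc (((Nat.multinomial Finset.univ (σ ∘ (0 : Fin (Q + 1)).succAbove) : ℝ)
            * GBeta (fun i : Fin Q => κ + σ ((0 : Fin (Q + 1)).succAbove i))
            / GBeta (fun _ : Fin Q => κ)) * θ σ 0)
          * ((Nat.choose c b : ℝ)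
            * Beta2 (κ + b) (κ * (Q : ℝ) + ((c : ℝ) - b)) / Beta2 κ (κ * (Q : ℝ)))
        = (((Nat.multinomial Finset.univ (σ ∘ (0 : Fin (Q + 1)).succAbove) : ℝ)
            * GBeta (fun i : Fin Q => κ + σ ((0 : Fin (Q + 1)).succAbove i))
            / GBeta (fun _ : Fin Q => κ))
          * ((Nat.choose c b : ℝ)
            * Beta2 (κ + b) (κ * (Q : ℝ) + ((c : ℝ) - b)) / Beta2 κ (κ * (Q : ℝ)))) * θ σ 0 := by
          ring
      _ = P σ * θ σ 0 := by rw [hterm]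
  rw [Finset.sum_congr rfl key]
  have hmaps : ∀ σ ∈ S, σ 0 ∈ Finset.range (c+1) := by
    intro σ hσ
    rw [hS, Finset.Nat.mem_antidiagonalTuple] at hσ
    exact Finset.mem_range.mpr (Nat.lt_succ_of_le (hσ ▸ Finset.single_le_sum
      (f := σ) (fun i _ => Nat.zero_le _) (Finset.mem_univ 0)))
  rw [Finset.sum_fiberwise_of_maps_to hmaps (fun σ => P σ * θ σ 0)]
  have hPperm : ∀ (π : Equiv.Perm (Fin (Q+1))) (σ : Fin (Q+1) → ℕ), P (σ ∘ π) = P σ := by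
    intro π σ
    have h1 : Nat.multinomial Finset.univ (σ ∘ π) = Nat.multinomial Finset.univ σ := by
      unfold Nat.multinomial
      rw [show ∑ i ∈ Finset.univ, (σ ∘ π) i = ∑ i ∈ Finset.univ, σ i from Equiv.sum_comp π σ,
        show ∏ i ∈ Finset.univ, Nat.factorial ((σ ∘ π) i)
            = ∏ i ∈ Finset.univ, Nat.factorial (σ i) from
          Equiv.prod_comp π fun i => Nat.factorial (σ i)]
    have h2 : ∏ i, af κ ((σ ∘ π) i) = ∏ i, af κ (σ i) :=
      Equiv.prod_comp π fun i => af κ (σ i)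
    rw [hP]
    simp only
    rw [h1, h2]
  have hmemS : ∀ (σ : Fin (Q+1) → ℕ) (π : Equiv.Perm (Fin (Q+1))), σ ∈ S → σ ∘ π ∈ S := by
    intro σ π hσ
    rw [hS, Finset.Nat.mem_antidiagonalTuple] at *
    rw [show ∑ i, (σ ∘ π) i = ∑ i, σ i from Equiv.sum_comp π σ]
    exact hσ
  have hswap : ∀ y : Fin (Q+1), ∑ σ ∈ S, P σ * θ σ y = ∑ σ ∈ S, P σ * θ σ 0 := by
    intro y
    refine Finset.sum_nbij' (i := fun σ => σ ∘ Equiv.swap (0 : Fin (Q+1)) y)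
      (j := fun σ => σ ∘ Equiv.swap (0 : Fin (Q+1)) y)
      (fun σ hσ => hmemS σ _ hσ) (fun σ hσ => hmemS σ _ hσ) ?_ ?_ ?_
    · intro σ _
      funext i
      simp [Equiv.swap_apply_self]
    · intro σ _
      funext i
      simp [Equiv.swap_apply_self]
    · intro σ _
      rw [hPperm (Equiv.swap 0 y) σ, hsymm (Equiv.swap 0 y) σ 0, Equiv.swap_apply_left]
  have hnorm : ∑ σ ∈ S, P σ = 1 := by
    have hv : ∑ σ ∈ S, (Nat.multinomial Finset.univ σ : ℝ) * ∏ i, af κ (σ i)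
        = af (κ * ((Q:ℝ)+1)) c := by
      have hv0 := vanderN (Q+1) (fun _ => κ) c
      have hconst : ∑ _i : Fin (Q+1), κ = κ * ((Q:ℝ)+1) := by
        rw [Finset.sum_const, Finset.card_univ, Fintype.card_fin, nsmul_eq_mul]
        push_cast; ring
      rw [hconst] at hv0
      exact hv0
    rw [hP]
    simp only
    rw [← Finset.sum_div, hv, div_self (af_pos hQ1κ c).ne']
  have hcard : ∑ y : Fin (Q+1), ∑ σ ∈ S, P σ * θ σ y
      = ((Q:ℝ)+1) * ∑ σ ∈ S, P σ * θ σ 0 := by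
    rw [Finset.sum_congr rfl (fun y _ => hswap y), Finset.sum_const, Finset.card_univ,
      Fintype.card_fin, nsmul_eq_mul]
    push_cast; ring
  have hone : ∑ y : Fin (Q+1), ∑ σ ∈ S, P σ * θ σ y = 1 := by
    rw [Finset.sum_comm]
    calc ∑ σ ∈ S, ∑ y, P σ * θ σ y
        = ∑ σ ∈ S, P σ := by
          refine Finset.sum_congr rfl fun σ hσ => ?_
          rw [← Finset.mul_sum,
            hsum σ (by rw [hS, Finset.Nat.mem_antidiagonalTuple] at hσ; exact hσ), mul_one]
      _ = 1 := hnorm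
  rw [← hcard]
  exact hone
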